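/- Let A(x) be a continuous 2×2 matrix-valued function on [a,b] with all entries nonnegative, and let B be a constant 2×2 matrix with nonnegative entries such that B_{ij} ≤ A_{ij}(x) for all i,j and all x ∈ [a,b]. Let w ∈ ℝ² be a nonzero vector with nonnegative entries, and let y, z : [a,b] → ℝ² solve y' = A(x)y and z' = Bz with y(a) = z(a) = w. Then y_i(x) ≥ z_i(x) for i = 1,2 and all x ∈ [a,b]. -/

import Mathlib

open Set Matrix Filter Topology

private lemma np_subadd (s t : ℝ) : max (-(s + t)) 0 ≤ max (-s) 0 + max (-t) 0 := by
  rcases le_total s 0 with h | h <;> rcases le_total t 0 with h' | h' <;>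
    simp [max_def] <;> split_ifs <;> nlinarith

/-- Core lemma: componentwise differential inequality forces nonnegativity. -/
private lemma key (a b : ℝ) (hab : a ≤ b) (C : ℝ) (hC : 0 ≤ C)
    (u u' : ℝ → Fin 2 → ℝ)
    (hu : ∀ x ∈ Icc a b, ∀ i, HasDerivWithinAt (fun t => u t i) (u' x i) (Icc a b) x)
    (hbound : ∀ x ∈ Icc a b, ∀ i, -u' x i ≤ C * ∑ j, max (-(u x j)) 0)
    (ha : ∀ i, 0 ≤ u a i) :
    ∀ x ∈ Icc a b, ∀ i, 0 ≤ u x i := by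
  set f : ℝ → ℝ := fun x => ∑ j, max (-(u x j)) 0 with hf_def
  have hf_nonneg : ∀ x, 0 ≤ f x := fun x =>
    Finset.sum_nonneg fun j _ => le_max_right _ _
  have hf_cont : ContinuousOn f (Icc a b) := by
    apply continuousOn_finset_sum
    intro j _
    exact (continuous_neg.max continuous_const).comp_continuousOn
      (fun x hx => (hu x hx j).continuousWithinAt)
  have key2 : ∀ x ∈ Icc a b, f x ≤ gronwallBound 0 (2 * C) 0 (x - a) := by
    apply le_gronwallBound_of_liminf_deriv_right_le (f' := fun x => 2 * C * f x) hf_cont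
    · -- the liminf condition
      intro x hx r hr
      have hxI : x ∈ Icc a b := Ico_subset_Icc_self hx
      have hxb : x < b := hx.2
      have hsub : Ioc x b ⊆ Icc a b := fun z hz => ⟨le_trans hx.1 hz.1.le, hz.2⟩
      -- slope of each component tends to the derivative
      have hslope : ∀ i, Tendsto (fun z => (z - x)⁻¹ * (u z i - u x i))
          (𝓝[Ioc x b] x) (𝓝 (u' x i)) := by
        intro i
        have h1 : HasDerivWithinAt (fun t => u t i) (u' x i) (Ioc x b) x :=
          (hu x hxI i).mono hsub
        have := hasDerivWithinAt_iff_tendsto_slope.1 h1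
        rw [show Ioc x b \ {x} = Ioc x b by simp] at this
        refine this.congr (fun z => ?_)
        simp [slope_def_field, div_eq_inv_mul]
      have hT : Tendsto (fun z => ∑ i, max (-((z - x)⁻¹ * (u z i - u x i))) 0)
          (𝓝[Ioc x b] x) (𝓝 (∑ i, max (-(u' x i)) 0)) := by
        apply tendsto_finset_sum
        intro i _
        exact ((continuous_neg.max continuous_const).continuousAt.tendsto).comp (hslope i)
      have hle : (∑ i, max (-(u' x i)) 0) ≤ 2 * C * f x := by
        have : ∀ i : Fin 2, max (-(u' x i)) 0 ≤ C * f x := fun i =>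
          max_le (hbound x hxI i) (mul_nonneg hC (hf_nonneg x))
        calc (∑ i, max (-(u' x i)) 0) ≤ ∑ _i : Fin 2, C * f x :=
              Finset.sum_le_sum fun i _ => this i
          _ = 2 * C * f x := by simp [Finset.sum_const]; ring
      have hev : ∀ᶠ z in 𝓝[Ioc x b] x, (z - x)⁻¹ * (f z - f x) < r := by
        filter_upwards [hT.eventually_lt_const (lt_of_le_of_lt hle hr),
          self_mem_nhdsWithin] with z hz hzmem
        have hzx : 0 < z - x := sub_pos.2 hzmem.1
        refine lt_of_le_of_lt ?_ hz
        have h1 : f z - f x ≤ ∑ i, max (-(u z i - u x i)) 0 := by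
          rw [hf_def]
          rw [← Finset.sum_sub_distrib]
          apply Finset.sum_le_sum
          intro i _
          have := np_subadd (u z i - u x i) (u x i)
          simp only [sub_add_cancel] at this
          linarith
        calc (z - x)⁻¹ * (f z - f x) ≤ (z - x)⁻¹ * ∑ i, max (-(u z i - u x i)) 0 := by
              apply mul_le_mul_of_nonneg_left h1 (inv_nonneg.2 hzx.le)
          _ = ∑ i, max (-((z - x)⁻¹ * (u z i - u x i))) 0 := by
              rw [Finset.mul_sum]
              congr 1; funext i
              rw [mul_max_of_nonneg _ _ (inv_nonneg.2 hzx.le)]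
              ring_nf
      have hne : (𝓝[Ioc x b] x).NeBot := left_nhdsWithin_Ioc_neBot hxb
      exact hev.frequently.filter_mono (nhdsWithin_mono x Ioc_subset_Ioi_self)
    · simp only [hf_def]
      apply le_of_eq
      apply Finset.sum_eq_zero
      intro i _
      simp [max_eq_right, neg_nonpos.2 (ha i)]
    · intro x _; simp
  intro x hx i
  have h1 : f x ≤ 0 := by
    have := key2 x hx
    rwa [gronwallBound_ε0_δ0] at this
  have h2 : max (-(u x i)) 0 ≤ f x := by
    have : ∀ j : Fin 2, 0 ≤ max (-(u x j)) 0 := fun j => le_max_right _ _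
    exact Finset.single_le_sum (fun j _ => this j) (Finset.mem_univ i)
  have : max (-(u x i)) 0 ≤ 0 := le_trans h2 h1
  have := le_trans (le_max_left _ _) this
  linarith

theorem stmt_4 (a b : ℝ) (hab : a ≤ b)
    (A : ℝ → Matrix (Fin 2) (Fin 2) ℝ) (B : Matrix (Fin 2) (Fin 2) ℝ)
    (hAcont : ContinuousOn A (Icc a b))
    (hAnonneg : ∀ x ∈ Icc a b, ∀ i j, 0 ≤ A x i j)
    (hBnonneg : ∀ i j, 0 ≤ B i j)
    (hBA : ∀ x ∈ Icc a b, ∀ i j, B i j ≤ A x i j)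
    (w : Fin 2 → ℝ) (hw : w ≠ 0) (hwnonneg : ∀ i, 0 ≤ w i)
    (y z : ℝ → Fin 2 → ℝ)
    (hy : ∀ x ∈ Icc a b, HasDerivWithinAt y ((A x).mulVec (y x)) (Icc a b) x)
    (hz : ∀ x ∈ Icc a b, HasDerivWithinAt z (B.mulVec (z x)) (Icc a b) x)
    (hya : y a = w) (hza : z a = w) :
    ∀ x ∈ Icc a b, ∀ i, z x i ≤ y x i := by
  have haI : a ∈ Icc a b := ⟨le_refl a, hab⟩
  -- bound for the entries of A
  have hg : ContinuousOn (fun x => ∑ i, ∑ j, A x i j) (Icc a b) := by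
    apply continuousOn_finset_sum; intro i _
    apply continuousOn_finset_sum; intro j _
    exact (continuous_apply_apply i j).comp_continuousOn hAcont
  obtain ⟨x0, hx0, hx0max⟩ := isCompact_Icc.exists_isMaxOn ⟨a, haI⟩ hg
  set C : ℝ := ∑ i, ∑ j, A x0 i j with hC_def
  have hC : 0 ≤ C := Finset.sum_nonneg fun i _ =>
    Finset.sum_nonneg fun j _ => hAnonneg x0 hx0 i j
  have hentry : ∀ x ∈ Icc a b, ∀ i j, A x i j ≤ C := by
    intro x hx i j
    calc A x i j ≤ ∑ j', A x i j' :=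
          Finset.single_le_sum (fun j' _ => hAnonneg x hx i j') (Finset.mem_univ j)
      _ ≤ ∑ i', ∑ j', A x i' j' :=
          Finset.single_le_sum (fun i' _ => Finset.sum_nonneg fun j' _ => hAnonneg x hx i' j')
            (Finset.mem_univ i)
      _ ≤ C := hx0max hx
  have hBentry : ∀ i j, B i j ≤ C := fun i j => le_trans (hBA a haI i j) (hentry a haI i j)
  -- Step 1 : y is nonnegative on [a,b]
  have hy_nonneg : ∀ x ∈ Icc a b, ∀ i, 0 ≤ y x i := by
    apply key a b hab C hC y (fun x => (A x).mulVec (y x))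
    · intro x hx i
      exact (hasDerivWithinAt_pi.1 (hy x hx)) i
    · intro x hx i
      rw [Matrix.mulVec, dotProduct]
      rw [← Finset.sum_neg_distrib, Finset.mul_sum]
      apply Finset.sum_le_sum
      intro j _
      have h1 : -(A x i j * y x j) ≤ A x i j * max (-(y x j)) 0 := by
        rw [← mul_neg]
        exact mul_le_mul_of_nonneg_left (le_max_left _ _) (hAnonneg x hx i j)
      refine le_trans h1 (mul_le_mul_of_nonneg_right (hentry x hx i j) (le_max_right _ _))
    · intro i; rw [hya]; exact hwnonneg i
  -- Step 2 : y - z is nonnegative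
  have hu : ∀ x ∈ Icc a b, ∀ i, 0 ≤ y x i - z x i := by
    apply key a b hab C hC (fun t => y t - z t)
      (fun x => (A x).mulVec (y x) - B.mulVec (z x))
    · intro x hx i
      have h1 := (hasDerivWithinAt_pi.1 (hy x hx)) i
      have h2 := (hasDerivWithinAt_pi.1 (hz x hx)) i
      have h3 : HasDerivWithinAt (fun t => y t i - z t i) _ (Icc a b) x := h1.sub h2
      simpa using h3
    · intro x hx i
      simp only [Pi.sub_apply, Matrix.mulVec, dotProduct]
      have expand : -((∑ j, A x i j * y x j) - ∑ j, B i j * z x j)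
          = (∑ j, B i j * (z x j - y x j)) + ∑ j, (B i j - A x i j) * y x j := by
        rw [← Finset.sum_add_distrib, ← Finset.sum_sub_distrib, ← Finset.sum_neg_distrib]
        congr 1; funext j; ring
      rw [expand]
      have h2 : (∑ j, (B i j - A x i j) * y x j) ≤ 0 :=
        Finset.sum_nonpos fun j _ =>
          mul_nonpos_of_nonpos_of_nonneg (sub_nonpos.2 (hBA x hx i j)) (hy_nonneg x hx j)
      have h1 : (∑ j, B i j * (z x j - y x j)) ≤ C * ∑ j, max (-(y x j - z x j)) 0 := by
        rw [Finset.mul_sum]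
        apply Finset.sum_le_sum
        intro j _
        have : z x j - y x j ≤ max (-(y x j - z x j)) 0 := by
          have := le_max_left (-(y x j - z x j)) 0; linarith
        calc B i j * (z x j - y x j) ≤ B i j * max (-(y x j - z x j)) 0 :=
              mul_le_mul_of_nonneg_left this (hBnonneg i j)
          _ ≤ C * max (-(y x j - z x j)) 0 :=
              mul_le_mul_of_nonneg_right (hBentry i j) (le_max_right _ _)
      linarith
    · intro i; simp [hya, hza]
  intro x hx i
  have := hu x hx i
  linarith
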